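/- A bijective bounded linear operator S on H ⊕ ℂ preserves the form 𝒜 (i.e. S ∈ G) if and only if there exist θ ∈ ℝ, ξ ∈ H and a unitary operator U on H such that, with a = Real.sqrt (1 + ‖ξ‖²) and A the operator A x = x + ((a−1)/‖ξ‖²)·⟨x,ξ⟩·ξ (interpreted as A = I when ξ = 0), one has S(x,z) = exp(iθ)·(U(A x) + z·U ξ, ⟨x,ξ⟩ + a·z) for all (x,z) ∈ H ⊕ ℂ. -/

import Mathlib

open scoped InnerProductSpace ComplexConjugate

noncomputable section

variable {H : Type*} [NormedAddCommGroup H] [InnerProductSpace ℂ H]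

/-- The vector `(x, z)` of the Hilbert space direct sum `H ⊕ ℂ`. -/
def mkE (x : H) (z : ℂ) : WithLp 2 (H × ℂ) := (WithLp.equiv 2 (H × ℂ)).symm (x, z)

/-- The sesquilinear form `𝒜((x,λ),(y,μ)) = ⟨x,y⟩ − λ·conj(μ)`, where `⟨·,·⟩` is linear in the
first variable and conjugate-linear in the second (so `⟨x,y⟩ = ⟪y,x⟫_ℂ` in Mathlib's
convention). -/
def formA (v w : WithLp 2 (H × ℂ)) : ℂ :=
  ⟪(WithLp.equiv 2 (H × ℂ) w).1, (WithLp.equiv 2 (H × ℂ) v).1⟫_ℂ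
    - (WithLp.equiv 2 (H × ℂ) v).2 * conj (WithLp.equiv 2 (H × ℂ) w).2

namespace Stmt0Aux

set_option linter.unusedSectionVars false

variable {H : Type*} [NormedAddCommGroup H] [InnerProductSpace ℂ H]

/-! ### basic facts about `mkE` and `formA` -/

lemma mkE_eta (v : WithLp 2 (H × ℂ)) :
    mkE (WithLp.equiv 2 (H × ℂ) v).1 (WithLp.equiv 2 (H × ℂ) v).2 = v := rfl

lemma mkE_add (x y : H) (z w : ℂ) : mkE x z + mkE y w = mkE (x + y) (z + w) := rfl

lemma mkE_smul (c : ℂ) (x : H) (z : ℂ) : c • mkE x z = mkE (c • x) (c * z) := rfl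

lemma formA_mk (x y : H) (z w : ℂ) :
    formA (mkE x z) (mkE y w) = ⟪y, x⟫_ℂ - z * conj w := rfl

lemma mkE_inj {x y : H} {z w : ℂ} (h : mkE x z = mkE y w) : x = y ∧ z = w := by
  have h1 := congrArg (fun v => (WithLp.equiv 2 (H × ℂ) v).1) h
  have h2 := congrArg (fun v => (WithLp.equiv 2 (H × ℂ) v).2) h
  exact ⟨h1, h2⟩

/-! ### rank-one modifications -/

lemma inner_self_c (ξ : H) : ⟪ξ, ξ⟫_ℂ = ((‖ξ‖^2 : ℝ) : ℂ) := by
  rw [inner_self_eq_norm_sq_to_K]; norm_num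

lemma inner_mod_mod (ξ x y : H) (c d : ℝ) :
    ⟪y + ((d:ℂ) * ⟪ξ, y⟫_ℂ) • ξ, x + ((c:ℂ) * ⟪ξ, x⟫_ℂ) • ξ⟫_ℂ
      = ⟪y, x⟫_ℂ + ((c + d + c*d*‖ξ‖^2 : ℝ) : ℂ) * (⟪y, ξ⟫_ℂ * ⟪ξ, x⟫_ℂ) := by
  simp only [inner_add_left, inner_add_right, inner_smul_left, inner_smul_right, map_mul,
    Complex.conj_ofReal, ← inner_conj_symm y ξ, inner_self_c]
  push_cast
  ring

lemma inner_xi_mod (ξ x : H) (c : ℝ) :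
    ⟪ξ, x + ((c:ℂ) * ⟪ξ, x⟫_ℂ) • ξ⟫_ℂ = ((1 + c*‖ξ‖^2 : ℝ) : ℂ) * ⟪ξ, x⟫_ℂ := by
  simp only [inner_add_right, inner_smul_right, inner_self_c]
  push_cast; ring

lemma inner_mod_xi (ξ y : H) (d : ℝ) :
    ⟪y + ((d:ℂ) * ⟪ξ, y⟫_ℂ) • ξ, ξ⟫_ℂ = ((1 + d*‖ξ‖^2 : ℝ) : ℂ) * ⟪y, ξ⟫_ℂ := by
  simp only [inner_add_left, inner_smul_left, map_mul, Complex.conj_ofReal,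
    ← inner_conj_symm y ξ, inner_self_c]
  push_cast; ring

lemma mod_mod (ξ x : H) (c d : ℝ) :
    (x + ((c:ℂ) * ⟪ξ, x⟫_ℂ) • ξ)
      + ((d:ℂ) * ⟪ξ, x + ((c:ℂ) * ⟪ξ, x⟫_ℂ) • ξ⟫_ℂ) • ξ
      = x + (((c + d + c*d*‖ξ‖^2 : ℝ) : ℂ) * ⟪ξ, x⟫_ℂ) • ξ := by
  rw [inner_xi_mod]
  rw [add_assoc, ← add_smul]
  push_cast; ring_nf

/-! ### the scalars -/

def aK (ξ : H) : ℝ := Real.sqrt (1 + ‖ξ‖^2)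
def kA (ξ : H) : ℝ := (aK ξ - 1)/‖ξ‖^2
def kA' (ξ : H) : ℝ := (1/aK ξ - 1)/‖ξ‖^2

lemma aK_pos (ξ : H) : 0 < aK ξ := Real.sqrt_pos.2 (by positivity)

lemma aK_sq (ξ : H) : aK ξ ^ 2 = 1 + ‖ξ‖^2 := Real.sq_sqrt (by positivity)

lemma kA_mul (ξ : H) : kA ξ * ‖ξ‖^2 = aK ξ - 1 := by
  by_cases h : ‖ξ‖^2 = 0
  · have : aK ξ = 1 := by rw [aK, h]; simp
    rw [h, this]; ring
  · rw [kA, div_mul_cancel₀ _ h]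

lemma kA'_mul (ξ : H) : kA' ξ * ‖ξ‖^2 = 1/aK ξ - 1 := by
  by_cases h : ‖ξ‖^2 = 0
  · have : aK ξ = 1 := by rw [aK, h]; simp
    rw [h, this]; ring
  · rw [kA', div_mul_cancel₀ _ h]

lemma coef1 (ξ : H) (hξ : ξ ≠ 0) : kA ξ + kA ξ + kA ξ * kA ξ * ‖ξ‖^2 = 1 := by
  have ht : ‖ξ‖^2 ≠ 0 := pow_ne_zero 2 (norm_ne_zero_iff.mpr hξ)
  apply mul_right_cancel₀ ht
  have e : (kA ξ + kA ξ + kA ξ * kA ξ * ‖ξ‖^2) * ‖ξ‖^2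
      = 2*(kA ξ * ‖ξ‖^2) + (kA ξ * ‖ξ‖^2)^2 := by ring
  rw [e, kA_mul]
  linear_combination aK_sq ξ

lemma coef2 (ξ : H) (hξ : ξ ≠ 0) :
    (kA' ξ + kA' ξ + kA' ξ * kA' ξ * ‖ξ‖^2) + (1 + kA' ξ * ‖ξ‖^2)^2 = 0 := by
  have ht : ‖ξ‖^2 ≠ 0 := pow_ne_zero 2 (norm_ne_zero_iff.mpr hξ)
  have ha : aK ξ ≠ 0 := (aK_pos ξ).ne'
  apply mul_right_cancel₀ ht
  have e : ((kA' ξ + kA' ξ + kA' ξ * kA' ξ * ‖ξ‖^2) + (1 + kA' ξ * ‖ξ‖^2)^2) * ‖ξ‖^2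
      = 2*(kA' ξ * ‖ξ‖^2) + (kA' ξ * ‖ξ‖^2)^2 + ‖ξ‖^2*(1 + kA' ξ * ‖ξ‖^2)^2 := by ring
  rw [e, kA'_mul]
  field_simp
  linear_combination (-1) * aK_sq ξ

lemma coef3 (ξ : H) : kA ξ + kA' ξ + kA ξ * kA' ξ * ‖ξ‖^2 = 0 := by
  by_cases h : ‖ξ‖^2 = 0
  · have h1 : aK ξ = 1 := by rw [aK, h]; simp
    rw [kA, kA', h, h1]; norm_num
  · have ha : aK ξ ≠ 0 := (aK_pos ξ).ne'
    apply mul_right_cancel₀ h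
    have e : (kA ξ + kA' ξ + kA ξ * kA' ξ * ‖ξ‖^2) * ‖ξ‖^2
        = (kA ξ * ‖ξ‖^2) + (kA' ξ * ‖ξ‖^2) + (kA ξ * ‖ξ‖^2)*(kA' ξ * ‖ξ‖^2) := by ring
    rw [e, kA_mul, kA'_mul]
    field_simp
    ring

lemma coefA' (ξ : H) : 1 + kA' ξ * ‖ξ‖^2 = 1/aK ξ := by
  rw [kA'_mul]; ring

lemma coefA (ξ : H) : 1 + kA ξ * ‖ξ‖^2 = aK ξ := by
  rw [kA_mul]; ring

/-! ### the operator `Bop ξ = A⁻¹` -/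

def Bop (ξ : H) : H →L[ℂ] H :=
  ContinuousLinearMap.id ℂ H + ((kA' ξ : ℂ)) • (innerSL ℂ ξ).smulRight ξ

lemma Bop_apply (ξ x : H) : Bop ξ x = x + ((kA' ξ : ℂ) * ⟪ξ, x⟫_ℂ) • ξ := by
  simp only [Bop, ContinuousLinearMap.add_apply, ContinuousLinearMap.coe_id', id_eq,
    ContinuousLinearMap.smul_apply, ContinuousLinearMap.smulRight_apply, innerSL_apply_apply,
    smul_smul]

lemma BA (ξ x : H) : Bop ξ (x + ((kA ξ : ℂ) * ⟪ξ, x⟫_ℂ) • ξ) = x := by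
  rw [Bop_apply, mod_mod, coef3]
  push_cast
  simp

lemma Bxi (ξ : H) : Bop ξ ξ = ((1/aK ξ : ℝ) : ℂ) • ξ := by
  rw [Bop_apply, inner_self_c, ← coefA' ξ]
  nth_rewrite 1 [← one_smul ℂ ξ]
  rw [← add_smul]
  push_cast
  ring_nf

lemma key1 (ξ x y : H) :
    ⟪y + ((kA ξ : ℂ) * ⟪ξ, y⟫_ℂ) • ξ, x + ((kA ξ : ℂ) * ⟪ξ, x⟫_ℂ) • ξ⟫_ℂ
      = ⟪y, x⟫_ℂ + ⟪y, ξ⟫_ℂ * ⟪ξ, x⟫_ℂ := by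
  by_cases hξ : ξ = 0
  · simp [hξ]
  · rw [inner_mod_mod, coef1 ξ hξ]
    norm_num

lemma key2 (ξ x : H) :
    ⟪ξ, x + ((kA ξ : ℂ) * ⟪ξ, x⟫_ℂ) • ξ⟫_ℂ = (aK ξ : ℂ) * ⟪ξ, x⟫_ℂ := by
  rw [inner_xi_mod, coefA]

lemma key3 (ξ y : H) :
    ⟪y + ((kA ξ : ℂ) * ⟪ξ, y⟫_ℂ) • ξ, ξ⟫_ℂ = (aK ξ : ℂ) * ⟪y, ξ⟫_ℂ := by
  rw [inner_mod_xi, coefA]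

lemma keyU (ξ x y : H) :
    ⟪Bop ξ y, Bop ξ x⟫_ℂ + ⟪Bop ξ y, ξ⟫_ℂ * ⟪ξ, Bop ξ x⟫_ℂ = ⟪y, x⟫_ℂ := by
  by_cases hξ : ξ = 0
  · simp [hξ, Bop_apply]
  · have c2 : (((kA' ξ + kA' ξ + kA' ξ * kA' ξ * ‖ξ‖^2) + (1 + kA' ξ * ‖ξ‖^2)^2 : ℝ) : ℂ) = 0 := by
      rw [coef2 ξ hξ]; norm_num
    rw [Bop_apply ξ x, Bop_apply ξ y, inner_mod_mod, inner_mod_xi, inner_xi_mod]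
    push_cast at c2 ⊢
    linear_combination (⟪y, ξ⟫_ℂ * ⟪ξ, x⟫_ℂ) * c2


lemma exp_mul_conj (θ : ℝ) :
    Complex.exp (θ * Complex.I) * conj (Complex.exp (θ * Complex.I)) = 1 := by
  rw [← Complex.exp_conj, ← Complex.exp_add]
  have : (θ : ℂ) * Complex.I + conj ((θ : ℂ) * Complex.I) = 0 := by
    rw [map_mul, Complex.conj_I, Complex.conj_ofReal]; ring
  rw [this, Complex.exp_zero]

lemma backward [CompleteSpace H]
    (S : WithLp 2 (H × ℂ) →L[ℂ] WithLp 2 (H × ℂ)) (θ : ℝ) (ξ : H) (U : H →L[ℂ] H)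
    (hU : U ∈ unitary (H →L[ℂ] H))
    (hform : ∀ (x : H) (z : ℂ),
      S (mkE x z) = Complex.exp (θ * Complex.I) •
        mkE (U (x + ((kA ξ : ℂ) * ⟪ξ, x⟫_ℂ) • ξ) + z • U ξ)
            (⟪ξ, x⟫_ℂ + (aK ξ : ℂ) * z)) :
    ∀ v w : WithLp 2 (H × ℂ), formA (S v) (S w) = formA v w := by
  intro v w
  set e := Complex.exp (θ * Complex.I) with he_def
  have he : e * conj e = 1 := exp_mul_conj θ
  have ha2 : ((aK ξ : ℂ))^2 = 1 + ((‖ξ‖^2 : ℝ) : ℂ) := by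
    norm_cast
    exact aK_sq ξ
  rw [← mkE_eta v, ← mkE_eta w]
  generalize (WithLp.equiv 2 (H × ℂ) v).1 = x
  generalize (WithLp.equiv 2 (H × ℂ) v).2 = z
  generalize (WithLp.equiv 2 (H × ℂ) w).1 = y
  generalize (WithLp.equiv 2 (H × ℂ) w).2 = u
  rw [hform x z, hform y u, mkE_smul, mkE_smul, formA_mk, formA_mk]
  have hP : U (x + ((kA ξ : ℂ) * ⟪ξ, x⟫_ℂ) • ξ) + z • U ξ
      = U ((x + ((kA ξ : ℂ) * ⟪ξ, x⟫_ℂ) • ξ) + z • ξ) := by simp only [map_add, map_smul]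
  have hQ : U (y + ((kA ξ : ℂ) * ⟪ξ, y⟫_ℂ) • ξ) + u • U ξ
      = U ((y + ((kA ξ : ℂ) * ⟪ξ, y⟫_ℂ) • ξ) + u • ξ) := by simp only [map_add, map_smul]
  rw [hP, hQ, inner_smul_left, inner_smul_right,
    ContinuousLinearMap.inner_map_map_of_mem_unitary hU]
  have hQP : ⟪(y + ((kA ξ : ℂ) * ⟪ξ, y⟫_ℂ) • ξ) + u • ξ,
      (x + ((kA ξ : ℂ) * ⟪ξ, x⟫_ℂ) • ξ) + z • ξ⟫_ℂ
      = ⟪y, x⟫_ℂ + ⟪y, ξ⟫_ℂ * ⟪ξ, x⟫_ℂ + z * ((aK ξ : ℂ) * ⟪y, ξ⟫_ℂ)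
        + conj u * ((aK ξ : ℂ) * ⟪ξ, x⟫_ℂ) + conj u * z * ((‖ξ‖^2 : ℝ) : ℂ) := by
    rw [inner_add_left, inner_add_right, key1 ξ x y, inner_smul_right, key3 ξ y,
      inner_smul_left, inner_add_right, key2 ξ x, inner_smul_right, inner_self_c]
    ring
  rw [hQP]
  simp only [map_add, map_mul, Complex.conj_ofReal, inner_conj_symm]
  linear_combination (⟪y, x⟫_ℂ - z * conj u) * he - (e * conj e * z * conj u) * ha2


lemma formA_smul (c : ℂ) (v w : WithLp 2 (H × ℂ)) :
    formA (c • v) (c • w) = (c * conj c) * formA v w := by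
  rw [← mkE_eta v, ← mkE_eta w, mkE_smul, mkE_smul, formA_mk, formA_mk,
    inner_smul_left, inner_smul_right, map_mul]
  ring

set_option maxHeartbeats 1000000 in
lemma forward [CompleteSpace H]
    (S : WithLp 2 (H × ℂ) →L[ℂ] WithLp 2 (H × ℂ)) (hS : Function.Bijective S)
    (hpres : ∀ v w : WithLp 2 (H × ℂ), formA (S v) (S w) = formA v w) :
    ∃ (θ : ℝ) (ξ : H) (U : H →L[ℂ] H), U ∈ unitary (H →L[ℂ] H) ∧
      ∀ (x : H) (z : ℂ),
        S (mkE x z) = Complex.exp (θ * Complex.I) •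
          mkE (U (x + ((kA ξ : ℂ) * ⟪ξ, x⟫_ℂ) • ξ) + z • U ξ)
              (⟪ξ, x⟫_ℂ + (aK ξ : ℂ) * z) := by
  classical
  -- the image of (0,1)
  set w₀ : H := (WithLp.equiv 2 (H × ℂ) (S (mkE 0 1))).1 with hw₀
  set c : ℂ := (WithLp.equiv 2 (H × ℂ) (S (mkE 0 1))).2 with hc
  have hS01 : S (mkE 0 1) = mkE w₀ c := (mkE_eta _).symm
  have hm1 : ⟪w₀, w₀⟫_ℂ - c * conj c = -1 := by
    have h := hpres (mkE 0 1) (mkE 0 1)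
    rw [hS01, formA_mk, formA_mk] at h
    simpa using h
  have hcabs : (‖c‖)^2 = 1 + ‖w₀‖^2 := by
    have : ((‖w₀‖^2 : ℝ) : ℂ) - ((Complex.normSq c : ℝ) : ℂ) = -1 := by
      rw [← inner_self_c, ← Complex.mul_conj]; exact hm1
    have h2 : (‖w₀‖^2 : ℝ) - Complex.normSq c = -1 := by exact_mod_cast this
    rw [Complex.sq_norm]; linarith
  have hcne : c ≠ 0 := by
    intro h
    rw [h] at hcabs
    simp at hcabs
    nlinarith [sq_nonneg ‖w₀‖]
  set a : ℝ := ‖c‖ with ha_def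
  have ha_pos : 0 < a := norm_pos_iff.mpr hcne
  set θ : ℝ := c.arg with hθ
  set e : ℂ := Complex.exp (θ * Complex.I) with he_def
  have hac : (a : ℂ) * e = c := Complex.norm_mul_exp_arg_mul_I c
  have hene : e ≠ 0 := Complex.exp_ne_zero _
  have he : e * conj e = 1 := exp_mul_conj θ
  have heinv : e⁻¹ * c = (a : ℂ) := by
    field_simp [← hac]
    linear_combination -hac
  -- the normalized operator T
  set T : WithLp 2 (H × ℂ) →L[ℂ] WithLp 2 (H × ℂ) := e⁻¹ • S with hT_def
  have hTapp : ∀ v, T v = e⁻¹ • S v := fun _ => rfl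
  set w' : H := e⁻¹ • w₀ with hw'
  have hT01 : T (mkE 0 1) = mkE w' ((a : ℝ) : ℂ) := by
    rw [hTapp, hS01, mkE_smul, heinv]
  have hTpres : ∀ v w, formA (T v) (T w) = formA v w := by
    intro v w
    rw [hTapp, hTapp, formA_smul, hpres]
    have : e⁻¹ * conj e⁻¹ = 1 := by
      rw [map_inv₀, ← mul_inv, he, inv_one]
    rw [this, one_mul]
  have hTbij : Function.Bijective T := by
    constructor
    · intro p q h
      rw [hTapp, hTapp] at h
      exact hS.1 (smul_right_injective _ (inv_ne_zero hene) h)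
    · intro v
      obtain ⟨u, hu⟩ := hS.2 (e • v)
      exact ⟨u, by rw [hTapp, hu, smul_smul, inv_mul_cancel₀ hene, one_smul]⟩
  -- the Riesz vector ξ and the operator T₁
  set fstL : WithLp 2 (H × ℂ) →L[ℂ] H :=
    (ContinuousLinearMap.fst ℂ H ℂ).comp
      (WithLp.prodContinuousLinearEquiv 2 ℂ H ℂ).toContinuousLinearMap with hfstL
  set sndL : WithLp 2 (H × ℂ) →L[ℂ] ℂ :=
    (ContinuousLinearMap.snd ℂ H ℂ).comp
      (WithLp.prodContinuousLinearEquiv 2 ℂ H ℂ).toContinuousLinearMap with hsndL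
  set inlL : H →L[ℂ] WithLp 2 (H × ℂ) :=
    (WithLp.prodContinuousLinearEquiv 2 ℂ H ℂ).symm.toContinuousLinearMap.comp
      (ContinuousLinearMap.inl ℂ H ℂ) with hinlL
  set ξ : H := (InnerProductSpace.toDual ℂ H).symm (sndL.comp (T.comp inlL)) with hξdef
  have hξ : ∀ x : H, ⟪ξ, x⟫_ℂ = (WithLp.equiv 2 (H × ℂ) (T (mkE x 0))).2 := by
    intro x
    rw [hξdef]
    exact InnerProductSpace.toDual_symm_apply
  set T₁ : H →L[ℂ] H := fstL.comp (T.comp inlL) with hT₁def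
  have hT1 : ∀ x : H, T (mkE x 0) = mkE (T₁ x) ⟪ξ, x⟫_ℂ := by
    intro x
    rw [hξ]
    exact (mkE_eta _).symm
  -- isometry-type identity
  have hiso : ∀ x y : H, ⟪T₁ y, T₁ x⟫_ℂ = ⟪y, x⟫_ℂ + ⟪y, ξ⟫_ℂ * ⟪ξ, x⟫_ℂ := by
    intro x y
    have h := hTpres (mkE x 0) (mkE y 0)
    rw [hT1 x, hT1 y, formA_mk, formA_mk, inner_conj_symm] at h
    simp only [map_zero, mul_zero, sub_zero] at h
    linear_combination h
  -- orthogonality identity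
  have horth : ∀ x : H, ⟪w', T₁ x⟫_ℂ = (a : ℂ) * ⟪ξ, x⟫_ℂ := by
    intro x
    have h := hTpres (mkE x 0) (mkE 0 1)
    rw [hT1 x, hT01, formA_mk, formA_mk, Complex.conj_ofReal] at h
    simp only [inner_zero_left, map_one, mul_one, sub_zero, zero_mul, sub_zero] at h
    linear_combination h
  -- surjectivity of T₁
  have hsurj : ∀ y : H, ∃ x, T₁ x = y := by
    intro y
    obtain ⟨p, hp⟩ := hTbij.2 (mkE y 0)
    obtain ⟨r, hr⟩ := hTbij.2 (mkE 0 1)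
    set p1 : H := (WithLp.equiv 2 (H × ℂ) p).1 with hp1
    set p2 : ℂ := (WithLp.equiv 2 (H × ℂ) p).2 with hp2
    set r1 : H := (WithLp.equiv 2 (H × ℂ) r).1 with hr1
    set r2 : ℂ := (WithLp.equiv 2 (H × ℂ) r).2 with hr2
    have hr2ne : r2 ≠ 0 := by
      have h := hTpres r r
      rw [hr, ← mkE_eta r, ← hr1, ← hr2, formA_mk, formA_mk] at h
      simp only [inner_zero_left, inner_zero_right, map_one, mul_one] at h
      -- h : 0 - 1 * 1 = ⟪r1,r1⟫ - r2 * conj r2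
      have h2 : r2 * conj r2 = 1 + ((‖r1‖^2 : ℝ) : ℂ) := by
        rw [← inner_self_c]; linear_combination h
      intro h0
      rw [h0] at h2
      simp only [zero_mul] at h2
      have : (0 : ℝ) = 1 + ‖r1‖^2 := by exact_mod_cast h2
      nlinarith [sq_nonneg ‖r1‖]
    set μ : ℂ := -p2 / r2 with hμ
    refine ⟨p1 + μ • r1, ?_⟩
    have h0 : p2 + μ * r2 = 0 := by rw [hμ]; field_simp; ring
    have hsum : p + μ • r = mkE (p1 + μ • r1) (p2 + μ * r2) := rfl
    have hkey : mkE (p1 + μ • r1) (0 : ℂ) = p + μ • r := by rw [hsum, h0]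
    have h3 : T (mkE (p1 + μ • r1) (0 : ℂ)) = mkE y μ := by
      rw [hkey, map_add, map_smul, hp, hr, mkE_smul, mkE_add]
      norm_num
    rw [hT1] at h3
    exact (mkE_inj h3).1
  -- the key norm relation a² = 1 + ‖ξ‖²
  obtain ⟨v, hv⟩ := hsurj w'
  have hall : ∀ x : H, ⟪v, x⟫_ℂ + ⟪v, ξ⟫_ℂ * ⟪ξ, x⟫_ℂ = (a : ℂ) * ⟪ξ, x⟫_ℂ := by
    intro x
    have h1 := hiso x v
    rw [hv] at h1
    rw [← h1]
    exact horth x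
  set q : ℂ := (a : ℂ) - ⟪ξ, v⟫_ℂ with hq_def
  have hveq : v = q • ξ := by
    have hz : ∀ x : H, ⟪v - q • ξ, x⟫_ℂ = ⟪(0 : H), x⟫_ℂ := by
      intro x
      rw [inner_sub_left, inner_smul_left, inner_zero_left, hq_def, map_sub,
        Complex.conj_ofReal, inner_conj_symm]
      linear_combination hall x
    have := ext_inner_right ℂ hz
    rw [sub_eq_zero] at this
    exact this
  set t : ℝ := ‖ξ‖^2 with ht_def
  have hβ : ⟪ξ, v⟫_ℂ = q * (t : ℂ) := by
    rw [hveq, inner_smul_right, inner_self_c]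
  have hqt : q * (1 + (t : ℂ)) = (a : ℂ) := by
    linear_combination hq_def - hβ
  have hqc : conj q * (1 + (t : ℂ)) = (a : ℂ) := by
    have h := congrArg conj hqt
    simpa only [map_mul, map_add, map_one, Complex.conj_ofReal] using h
  have hw'T : ⟪w', w'⟫_ℂ = ((a : ℂ))^2 - 1 := by
    have h := hTpres (mkE 0 1) (mkE 0 1)
    rw [hT01, formA_mk, formA_mk, Complex.conj_ofReal] at h
    simp only [inner_zero_left, map_one, mul_one] at h
    linear_combination h
  have hvv : ⟪w', w'⟫_ℂ = conj q * q * (t : ℂ) * (1 + (t : ℂ)) := by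
    rw [← hv, hiso v v, hveq]
    simp only [inner_smul_left, inner_smul_right, inner_self_c]
    ring
  have R3 : ((a : ℂ))^2 - 1 = conj q * q * (t : ℂ) * (1 + (t : ℂ)) := by
    linear_combination hvv - hw'T
  have ha2c : ((a : ℂ))^2 = 1 + (t : ℂ) := by
    linear_combination (1 + (t : ℂ)) * R3 + (conj q * (t : ℂ) * (1 + (t : ℂ))) * hqt
      + ((a : ℂ) * (t : ℂ)) * hqc
  have ha2 : a^2 = 1 + t := by exact_mod_cast ha2c
  have haK : aK ξ = a := by
    rw [aK, ← ht_def, ← ha2, Real.sqrt_sq ha_pos.le]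
  have hane : (a : ℂ) ≠ 0 := by exact_mod_cast ha_pos.ne'
  have hq1a : q = 1 / (a : ℂ) := by
    have h5 : (q * (a : ℂ)) * (a : ℂ) = 1 * (a : ℂ) := by
      linear_combination hqt + q * ha2c
    exact eq_one_div_of_mul_eq_one_left (mul_right_cancel₀ hane h5)
  -- the unitary operator U
  set U : H →L[ℂ] H := T₁.comp (Bop ξ) with hUdef
  have hUapp : ∀ x : H, U x = T₁ (Bop ξ x) := fun _ => rfl
  have hUA : ∀ x : H, U (x + ((kA ξ : ℂ) * ⟪ξ, x⟫_ℂ) • ξ) = T₁ x := by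
    intro x
    rw [hUapp, BA]
  have hUinner : ∀ x y : H, ⟪U x, U y⟫_ℂ = ⟪x, y⟫_ℂ := by
    intro x y
    rw [hUapp, hUapp, hiso (Bop ξ y) (Bop ξ x)]
    exact keyU ξ y x
  have hUinj : Function.Injective U := by
    intro p' q' hpq
    have h : ⟪p' - q', p' - q'⟫_ℂ = 0 := by
      rw [← hUinner, map_sub, hpq, sub_self, inner_zero_left]
    exact sub_eq_zero.1 (inner_self_eq_zero.1 h)
  have hUsurj : Function.Surjective U := by
    intro y
    obtain ⟨x, hx⟩ := hsurj y
    exact ⟨x + ((kA ξ : ℂ) * ⟪ξ, x⟫_ℂ) • ξ, by rw [hUA, hx]⟩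
  have hUxi : U ξ = w' := by
    have hqq : ((1/aK ξ : ℝ) : ℂ) = q := by
      rw [hq1a, haK]; push_cast; ring
    rw [hUapp, Bxi, hqq, ← hveq, hv]
  -- assemble the unitary
  have hUbij : Function.Bijective ((U : H →L[ℂ] H) : H →ₗ[ℂ] H) := ⟨hUinj, hUsurj⟩
  set eqv : H ≃ₗ[ℂ] H := LinearEquiv.ofBijective _ hUbij with heqv
  set iso : H ≃ₗᵢ[ℂ] H := eqv.isometryOfInner (fun x y => hUinner x y) with hiso_def
  set Uu : unitary (H →L[ℂ] H) := Unitary.linearIsometryEquiv.symm iso with hUu_def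
  have hUu : ∀ y : H, ((Uu : H →L[ℂ] H)) y = U y := fun _ => rfl
  refine ⟨θ, ξ, (Uu : H →L[ℂ] H), Uu.property, ?_⟩
  intro x z
  rw [hUu, hUu, ← he_def]
  have hSx : S (mkE x z) = e • T (mkE x z) := by
    rw [hTapp, smul_smul, mul_inv_cancel₀ hene, one_smul]
  have hsplit : mkE x z = mkE x 0 + z • mkE (0 : H) (1 : ℂ) := by
    rw [mkE_smul, mkE_add]
    norm_num
  rw [hSx, hsplit, map_add, map_smul, hT1, hT01, mkE_smul, mkE_add, hUA, hUxi, haK,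
    mul_comm ((a : ℝ) : ℂ) z]

end Stmt0Aux

/-- A bijective bounded linear operator `S` on `H ⊕ ℂ` preserves the form `𝒜` (i.e. `S ∈ G`)
iff there are `θ ∈ ℝ`, `ξ ∈ H` and a unitary `U` on `H` such that, with
`a = √(1 + ‖ξ‖²)` and `A x = x + ((a−1)/‖ξ‖²)·⟨x,ξ⟩·ξ` (which is `I` when `ξ = 0`),
`S(x,z) = e^{iθ}·(U(A x) + z·U ξ, ⟨x,ξ⟩ + a·z)`. -/
theorem stmt0 [CompleteSpace H]
    (S : WithLp 2 (H × ℂ) →L[ℂ] WithLp 2 (H × ℂ)) (hS : Function.Bijective S) :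
    (∀ v w : WithLp 2 (H × ℂ), formA (S v) (S w) = formA v w) ↔
      ∃ (θ : ℝ) (ξ : H) (U : H →L[ℂ] H), U ∈ unitary (H →L[ℂ] H) ∧
        ∀ (x : H) (z : ℂ),
          S (mkE x z) =
            Complex.exp (θ * Complex.I) •
              mkE
                (U (x + ((((Real.sqrt (1 + ‖ξ‖ ^ 2) - 1) / ‖ξ‖ ^ 2 : ℝ) : ℂ) * ⟪ξ, x⟫_ℂ) • ξ)
                   + z • U ξ)
                (⟪ξ, x⟫_ℂ + (Real.sqrt (1 + ‖ξ‖ ^ 2) : ℝ) * z) := by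
  constructor
  · intro hpres
    obtain ⟨θ, ξ, U, hU, hform⟩ := Stmt0Aux.forward S hS hpres
    exact ⟨θ, ξ, U, hU, hform⟩
  · rintro ⟨θ, ξ, U, hU, hform⟩
    exact Stmt0Aux.backward S θ ξ U hU hform

end
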